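/- Let A : ℝ → ℂⁿˣⁿ and X : ℝ → ℂⁿˣⁿ be differentiable at t, suppose X(t) is invertible, and let η ∈ ℝ. Define the error function E(s) = A(s) − X(s)⁻¹. Then E′(t) = −η·E(t) holds if and only if X′(t) = −X(t)·A′(t)·X(t) − η·X(t)·A(t)·X(t) + η·X(t). -/

import Mathlib

open Matrix

attribute [local instance] Matrix.linftyOpNormedRing Matrix.linftyOpNormedAlgebra

noncomputable section

variable {n : ℕ}

theorem hasDerivAt_matrix {f : ℝ → Matrix (Fin n) (Fin n) ℂ}
    {f' : Matrix (Fin n) (Fin n) ℂ} {t : ℝ} :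
    HasDerivAt f f' t ↔ ∀ i j, HasDerivAt (fun s => f s i j) (f' i j) t := by
  let e : (Fin n → Fin n → ℂ) ≃L[ℝ] Matrix (Fin n) (Fin n) ℂ :=
    (Matrix.ofLinearEquiv ℝ).toContinuousLinearEquiv
  constructor
  · intro h i j
    have h1 : HasDerivAt (fun s => e.symm (f s)) (e.symm f') t :=
      (e.symm : Matrix (Fin n) (Fin n) ℂ →L[ℝ] (Fin n → Fin n → ℂ)).hasFDerivAt.comp_hasDerivAt t h
    exact hasDerivAt_pi.1 (hasDerivAt_pi.1 h1 i) j
  · intro h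
    have hg : HasDerivAt (fun s i j => f s i j) (fun i j => f' i j) t :=
      hasDerivAt_pi.2 fun i => hasDerivAt_pi.2 fun j => h i j
    exact (e : (Fin n → Fin n → ℂ) →L[ℝ] Matrix (Fin n) (Fin n) ℂ).hasFDerivAt.comp_hasDerivAt t hg

theorem hasDerivAt_matrix_inv {X : ℝ → Matrix (Fin n) (Fin n) ℂ}
    {X' : Matrix (Fin n) (Fin n) ℂ} {t : ℝ}
    (h : HasDerivAt X X' t) (hinv : IsUnit (X t)) :
    HasDerivAt (fun s => (X s)⁻¹) (-((X t)⁻¹ * X' * (X t)⁻¹)) t := by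
  haveI : CompleteSpace (Matrix (Fin n) (Fin n) ℂ) := FiniteDimensional.complete ℝ _
  obtain ⟨u, hu⟩ := hinv
  have h1 : HasFDerivAt (Ring.inverse : Matrix (Fin n) (Fin n) ℂ → _)
      (-ContinuousLinearMap.mulLeftRight ℝ _ ↑u⁻¹ ↑u⁻¹) (X t) := by
    rw [← hu]; exact hasFDerivAt_ringInverse u
  have h2 := h1.comp_hasDerivAt t h
  simp only [ContinuousLinearMap.neg_apply, ContinuousLinearMap.mulLeftRight_apply] at h2
  have h3 : (fun s => Ring.inverse (X s)) = fun s => (X s)⁻¹ := by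
    funext s; rw [Matrix.nonsing_inv_eq_ringInverse]
  rw [Function.comp_def, h3] at h2
  have h4 : (↑u⁻¹ : Matrix (Fin n) (Fin n) ℂ) = (X t)⁻¹ := by
    rw [← hu, Matrix.coe_units_inv]
  rw [h4] at h2
  simp only [mul_assoc] at h2 ⊢
  exact h2

/-- ZNN derivation for time-varying matrix inversion: with error function
`E(s) = A(s) - X(s)⁻¹` and `X(t)` invertible, the decay equation
`E′(t) = -η E(t)` holds iff
`X′(t) = -X(t)A′(t)X(t) - η X(t)A(t)X(t) + η X(t)`.
All derivatives are entrywise in the real parameter `t`. -/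
theorem znn_time_varying_matrix_inverse
    {n : ℕ} (t η : ℝ)
    (A X : ℝ → Matrix (Fin n) (Fin n) ℂ)
    (A' X' : Matrix (Fin n) (Fin n) ℂ)
    (hA : ∀ i j : Fin n, HasDerivAt (fun s => A s i j) (A' i j) t)
    (hX : ∀ i j : Fin n, HasDerivAt (fun s => X s i j) (X' i j) t)
    (hinv : IsUnit (X t))
    (E : ℝ → Matrix (Fin n) (Fin n) ℂ) (hE : ∀ s, E s = A s - (X s)⁻¹) :
    (∀ i j : Fin n, HasDerivAt (fun s => E s i j) (-(η : ℂ) * E t i j) t) ↔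
      X' = -(X t * A' * X t) - (η : ℂ) • (X t * A t * X t) + (η : ℂ) • X t := by
  have hdet : IsUnit (X t).det := (Matrix.isUnit_iff_isUnit_det _).mp hinv
  have h1 : X t * (X t)⁻¹ = 1 := Matrix.mul_nonsing_inv _ hdet
  have h2 : (X t)⁻¹ * X t = 1 := Matrix.nonsing_inv_mul _ hdet
  have hAd : HasDerivAt A A' t := hasDerivAt_matrix.2 hA
  have hXd : HasDerivAt X X' t := hasDerivAt_matrix.2 hX
  have hId := hasDerivAt_matrix_inv hXd hinv
  have hEd : HasDerivAt E (A' + (X t)⁻¹ * X' * (X t)⁻¹) t := by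
    have h := hAd.sub hId
    rw [sub_neg_eq_add] at h
    have hEq : E = fun s => A s - (X s)⁻¹ := funext hE
    rw [hEq]; exact h
  constructor
  · intro h
    have hm : HasDerivAt E ((-(η : ℂ)) • E t) t :=
      hasDerivAt_matrix.2 (by intro i j; simpa [Matrix.smul_apply] using h i j)
    have key : A' + (X t)⁻¹ * X' * (X t)⁻¹ = (-(η : ℂ)) • E t := hEd.unique hm
    have key2 : (X t)⁻¹ * X' * (X t)⁻¹ = (-(η : ℂ)) • E t - A' := by
      rw [← key]; abel
    have hX' : X' = X t * ((-(η : ℂ)) • E t - A') * X t := by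
      calc X' = X t * (X t)⁻¹ * X' * ((X t)⁻¹ * X t) := by rw [h1, h2, one_mul, mul_one]
        _ = X t * ((X t)⁻¹ * X' * (X t)⁻¹) * X t := by
            simp only [mul_assoc]
        _ = X t * ((-(η : ℂ)) • E t - A') * X t := by rw [key2]
    rw [hX', hE t]
    simp only [smul_sub, sub_mul, mul_sub, add_mul, mul_add, mul_smul_comm, smul_mul_assoc,
      neg_smul, mul_assoc, neg_sub, sub_neg_eq_add]
    simp only [← mul_assoc, mul_neg, neg_mul, mul_smul_comm, smul_mul_assoc, h1, h2, one_mul, mul_one]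
    abel
  · intro hX'
    have key : A' + (X t)⁻¹ * X' * (X t)⁻¹ = (-(η : ℂ)) • E t := by
      rw [hX', hE t]
      simp only [smul_sub, sub_mul, mul_sub, add_mul, mul_add, mul_neg, neg_mul,
        mul_smul_comm, smul_mul_assoc, neg_smul, mul_assoc]
      simp only [← mul_assoc, mul_neg, neg_mul, mul_smul_comm, smul_mul_assoc, h1, h2, one_mul, mul_one]
      abel
    rw [key] at hEd
    intro i j
    simpa [Matrix.smul_apply] using hasDerivAt_matrix.1 hEd i j

end
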